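/- Let C_n(t) be the Narayana polynomials (C_0(t) = 1, C_n(t) = Σ_{k=0}^{n-1} (1/(k+1))·binom(n,k)·binom(n-1,k)·t^k for n > 0), with generating functions c_0(x,t) = Σ_{n≥0} C_n(t)·x^n and c_1(x,t) = 1 + t·Σ_{n≥1} C_n(t)·x^n over ℚ[t], and define C_{2,n}(t) as the coefficient of x^n in c_0(x,t)·c_1(x,t). Then for every natural number n, C_{2,n}(t) = C_{n+1}(t). -/

import Mathlib

/-- The Narayana polynomials: `C₀(t) = 1` and
`Cₙ(t) = Σ_{k=0}^{n-1} (1/(k+1))·binom(n,k)·binom(n-1,k)·t^k` for `n > 0`. -/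
noncomputable def narayana (n : ℕ) : Polynomial ℚ :=
  if n = 0 then 1
  else ∑ k ∈ Finset.range n,
    Polynomial.C ((1 / (k + 1 : ℚ)) * (n.choose k) * ((n - 1).choose k)) * Polynomial.X ^ k

/-- The generating function `c₀(x,t) = Σ_{n≥0} Cₙ(t)·xⁿ` of the Narayana polynomials,
a formal power series in `x` over `ℚ[t]`. -/
noncomputable def narGF0 : PowerSeries (Polynomial ℚ) := PowerSeries.mk narayana

/-- The generating function `c₁(x,t) = 1 + t·Σ_{n≥1} Cₙ(t)·xⁿ`,
a formal power series in `x` over `ℚ[t]`. -/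
noncomputable def narGF1 : PowerSeries (Polynomial ℚ) :=
  PowerSeries.mk fun n => if n = 0 then 1 else Polynomial.X * narayana n

open Nat PowerSeries

set_option maxHeartbeats 1000000

lemma nar_coeff (m k : ℕ) :
    (narayana (m+1)).coeff k = (1 / (k + 1 : ℚ)) * ((m+1).choose k) * (m.choose k) := by
  unfold narayana
  simp only [Nat.add_sub_cancel, if_neg (Nat.succ_ne_zero m)]
  rw [Polynomial.finset_sum_coeff]
  simp only [Polynomial.coeff_C_mul, Polynomial.coeff_X_pow]
  rw [Finset.sum_eq_single k]
  · simp
  · intro b _ hb; simp [Ne.symm hb]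
  · intro hk
    simp only [Finset.mem_range, not_lt] at hk
    have : m.choose k = 0 := Nat.choose_eq_zero_of_lt (by omega)
    simp [this]

lemma nar_coeff' (n k : ℕ) (h : n ≠ 0) :
    (narayana n).coeff k = (1 / (k + 1 : ℚ)) * (n.choose k) * ((n-1).choose k) := by
  obtain ⟨m, rfl⟩ : ∃ m, n = m + 1 := ⟨n-1, by omega⟩
  rw [nar_coeff]; simp

lemma choose_q (x a b : ℕ) (h : x = a + b) : (x.choose a : ℚ) = (x !) / ((a !) * (b !)) := by
  subst h; exact Nat.cast_add_choose (K := ℚ)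

lemma fe1 (a : ℕ) : (a+1)! = (a+1)*(a !) := by simp [Nat.factorial_succ]
lemma fe2 (a : ℕ) : (a+2)! = (a+2)*((a+1)*(a !)) := by simp [Nat.factorial_succ]
lemma fe3 (a : ℕ) : (a+3)! = (a+3)*((a+2)*((a+1)*(a !))) := by simp [Nat.factorial_succ]
lemma fg3 (a : ℕ) : (a+3)! = (a+3)*((a+2)!) := by simp [Nat.factorial_succ]
lemma fg4 (a : ℕ) : (a+4)! = (a+4)*((a+3)*((a+2)!)) := by simp [Nat.factorial_succ]
lemma fg5 (a : ℕ) : (a+5)! = (a+5)*((a+4)*((a+3)*((a+2)!))) := by simp [Nat.factorial_succ]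




-- case m = j+1 (k = j+2 = m+1)
lemma case_mj1 (j : ℕ) :
    ((j:ℚ)+5) / (j+3) * ((j+4).choose (j+2)) * ((j+3).choose (j+2))
    = (2*(j:ℚ)+7) * ( (1/((j:ℚ)+3)) * ((j+3).choose (j+2)) * ((j+2).choose (j+2))
        + (1/((j:ℚ)+2)) * ((j+3).choose (j+1)) * ((j+2).choose (j+1)) )
      - ((j:ℚ)+2) * ( (1/((j:ℚ)+3)) * ((j+2).choose (j+2)) * ((j+1).choose (j+2))
        - 2 * (1/((j:ℚ)+2)) * ((j+2).choose (j+1)) * ((j+1).choose (j+1))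
        + (1/((j:ℚ)+1)) * ((j+2).choose j) * ((j+1).choose j) ) := by
  have z1 : (j+1).choose (j+2) = 0 := Nat.choose_eq_zero_of_lt (by omega)
  have v1 : ((j+4).choose (j+2) : ℚ) = ((j:ℚ)+4)*((j:ℚ)+3)/2 := by
    rw [choose_q (j+4) (j+2) 2 (by omega), fe2 (j+2)]
    push_cast [fe2, fe1]
    have : ((j+2)! : ℚ) ≠ 0 := Nat.cast_ne_zero.2 (Nat.factorial_ne_zero _)
    field_simp
    ring
  have v2 : ((j+3).choose (j+2) : ℚ) = ((j:ℚ)+3) := by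
    rw [choose_q (j+3) (j+2) 1 (by omega), fe1 (j+2)]
    have : ((j+2)! : ℚ) ≠ 0 := Nat.cast_ne_zero.2 (Nat.factorial_ne_zero _)
    push_cast
    field_simp
    ring
  have v3 : ((j+3).choose (j+1) : ℚ) = ((j:ℚ)+3)*((j:ℚ)+2)/2 := by
    rw [choose_q (j+3) (j+1) 2 (by omega), fe2 (j+1)]
    have : ((j+1)! : ℚ) ≠ 0 := Nat.cast_ne_zero.2 (Nat.factorial_ne_zero _)
    push_cast
    field_simp
    ring
  have v4 : ((j+2).choose (j+1) : ℚ) = ((j:ℚ)+2) := by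
    rw [choose_q (j+2) (j+1) 1 (by omega), fe1 (j+1)]
    have : ((j+1)! : ℚ) ≠ 0 := Nat.cast_ne_zero.2 (Nat.factorial_ne_zero _)
    push_cast
    field_simp
    ring
  have v5 : ((j+2).choose j : ℚ) = ((j:ℚ)+2)*((j:ℚ)+1)/2 := by
    rw [choose_q (j+2) j 2 (by omega), fe2 j]
    have : ((j)! : ℚ) ≠ 0 := Nat.cast_ne_zero.2 (Nat.factorial_ne_zero _)
    push_cast
    field_simp
    ring
  have v6 : ((j+1).choose j : ℚ) = ((j:ℚ)+1) := by
    rw [choose_q (j+1) j 1 (by omega), fe1 j]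
    have : ((j)! : ℚ) ≠ 0 := Nat.cast_ne_zero.2 (Nat.factorial_ne_zero _)
    push_cast
    field_simp
    simp
  rw [v1, v2, v3, v4, v5, v6, z1, Nat.choose_self, Nat.choose_self]
  have p1 : ((j:ℚ)+1) ≠ 0 := by positivity
  have p2 : ((j:ℚ)+2) ≠ 0 := by positivity
  have p3 : ((j:ℚ)+3) ≠ 0 := by positivity
  push_cast
  field_simp
  ring

-- case m = j (k = j+2 = m+2)
lemma case_mj (j : ℕ) :
    ((j:ℚ)+4) / (j+3) * ((j+3).choose (j+2)) * ((j+2).choose (j+2))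
    = (2*(j:ℚ)+5) * ( (1/((j:ℚ)+3)) * ((j+2).choose (j+2)) * ((j+1).choose (j+2))
        + (1/((j:ℚ)+2)) * ((j+2).choose (j+1)) * ((j+1).choose (j+1)) )
      - ((j:ℚ)+1) * ( (1/((j:ℚ)+3)) * ((j+1).choose (j+2)) * ((j).choose (j+2))
        - 2 * (1/((j:ℚ)+2)) * ((j+1).choose (j+1)) * ((j).choose (j+1))
        + (1/((j:ℚ)+1)) * ((j+1).choose j) * ((j).choose j) ) := by
  have z1 : (j+1).choose (j+2) = 0 := Nat.choose_eq_zero_of_lt (by omega)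
  have z2 : (j).choose (j+2) = 0 := Nat.choose_eq_zero_of_lt (by omega)
  have z3 : (j).choose (j+1) = 0 := Nat.choose_eq_zero_of_lt (by omega)
  have v2 : ((j+3).choose (j+2) : ℚ) = ((j:ℚ)+3) := by
    rw [choose_q (j+3) (j+2) 1 (by omega), fe1 (j+2)]
    have : ((j+2)! : ℚ) ≠ 0 := Nat.cast_ne_zero.2 (Nat.factorial_ne_zero _)
    push_cast
    field_simp
    ring
  have v4 : ((j+2).choose (j+1) : ℚ) = ((j:ℚ)+2) := by
    rw [choose_q (j+2) (j+1) 1 (by omega), fe1 (j+1)]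
    have : ((j+1)! : ℚ) ≠ 0 := Nat.cast_ne_zero.2 (Nat.factorial_ne_zero _)
    push_cast
    field_simp
    ring
  have v6 : ((j+1).choose j : ℚ) = ((j:ℚ)+1) := by
    rw [choose_q (j+1) j 1 (by omega), fe1 j]
    have : ((j)! : ℚ) ≠ 0 := Nat.cast_ne_zero.2 (Nat.factorial_ne_zero _)
    push_cast
    field_simp
    simp
  rw [v2, v4, v6, z1, z2, z3, Nat.choose_self, Nat.choose_self, Nat.choose_self]
  have p1 : ((j:ℚ)+1) ≠ 0 := by positivity
  have p2 : ((j:ℚ)+2) ≠ 0 := by positivity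
  have p3 : ((j:ℚ)+3) ≠ 0 := by positivity
  push_cast
  field_simp
  ring



lemma main_case (j e : ℕ) :
    ((j:ℚ)+e+6) / (j+3) * ((j+e+5).choose (j+2)) * ((j+e+4).choose (j+2))
    = (2*((j:ℚ)+e)+9) * ( (1/((j:ℚ)+3)) * ((j+e+4).choose (j+2)) * ((j+e+3).choose (j+2))
        + (1/((j:ℚ)+2)) * ((j+e+4).choose (j+1)) * ((j+e+3).choose (j+1)) )
      - ((j:ℚ)+e+3) * ( (1/((j:ℚ)+3)) * ((j+e+3).choose (j+2)) * ((j+e+2).choose (j+2))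
        - 2 * (1/((j:ℚ)+2)) * ((j+e+3).choose (j+1)) * ((j+e+2).choose (j+1))
        + (1/((j:ℚ)+1)) * ((j+e+3).choose j) * ((j+e+2).choose j) ) := by
  have nj : ((j !) : ℚ) ≠ 0 := Nat.cast_ne_zero.2 (Nat.factorial_ne_zero _)
  have ne' : ((e !) : ℚ) ≠ 0 := Nat.cast_ne_zero.2 (Nat.factorial_ne_zero _)
  have nje : (((j+e+2)!) : ℚ) ≠ 0 := Nat.cast_ne_zero.2 (Nat.factorial_ne_zero _)
  have p1 : ((j:ℚ)+1) ≠ 0 := by positivity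
  have p2 : ((j:ℚ)+2) ≠ 0 := by positivity
  have p3 : ((j:ℚ)+3) ≠ 0 := by positivity
  have q1 : ((e:ℚ)+1) ≠ 0 := by positivity
  have q2 : ((e:ℚ)+2) ≠ 0 := by positivity
  have q3 : ((e:ℚ)+3) ≠ 0 := by positivity
  set g : ℚ := ((j+e+2)!) / (((j+2)!) * ((e+3)!)) with hg
  have c1 : ((j+e+5).choose (j+2) : ℚ)
      = ((j:ℚ)+e+5)*((j:ℚ)+e+4)*((j:ℚ)+e+3) * g := by
    rw [choose_q (j+e+5) (j+2) (e+3) (by omega), show (j+e+5)! = ((j+e)+5)! from rfl, fg5, hg]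
    push_cast; ring
  have c2 : ((j+e+4).choose (j+2) : ℚ) = ((j:ℚ)+e+4)*((j:ℚ)+e+3)*((e:ℚ)+3) * g := by
    rw [choose_q (j+e+4) (j+2) (e+2) (by omega), show (j+e+4)! = ((j+e)+4)! from rfl, fg4, hg,
      show (e+3)! = ((e+2)!)*(e+3) by rw [fg3 e]; ring]
    push_cast
    field_simp
  have c3 : ((j+e+3).choose (j+2) : ℚ) = ((j:ℚ)+e+3)*((e:ℚ)+3)*((e:ℚ)+2) * g := by
    rw [choose_q (j+e+3) (j+2) (e+1) (by omega), show (j+e+3)! = ((j+e)+3)! from rfl, fg3, hg,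
      show (e+3)! = ((e+1)!)*((e+3)*(e+2)) by rw [fe3 e, fe1 e]; ring]
    push_cast
    field_simp
  have c4 : ((j+e+2).choose (j+2) : ℚ) = ((e:ℚ)+3)*((e:ℚ)+2)*((e:ℚ)+1) * g := by
    rw [choose_q (j+e+2) (j+2) e (by omega), hg,
      show (e+3)! = (e !)*((e+3)*(e+2)*(e+1)) by rw [fe3 e]; ring]
    push_cast
    field_simp
  have c5 : ((j+e+4).choose (j+1) : ℚ) = ((j:ℚ)+e+4)*((j:ℚ)+e+3)*((j:ℚ)+2) * g := by
    rw [choose_q (j+e+4) (j+1) (e+3) (by omega), show (j+e+4)! = ((j+e)+4)! from rfl, fg4, hg,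
      show (j+2)! = ((j+1)!)*(j+2) by rw [fe2 j, fe1 j]; ring]
    push_cast
    field_simp
  have c6 : ((j+e+3).choose (j+1) : ℚ) = ((j:ℚ)+e+3)*((j:ℚ)+2)*((e:ℚ)+3) * g := by
    rw [choose_q (j+e+3) (j+1) (e+2) (by omega), show (j+e+3)! = ((j+e)+3)! from rfl, fg3, hg,
      show (j+2)! = ((j+1)!)*(j+2) by rw [fe2 j, fe1 j]; ring,
      show (e+3)! = ((e+2)!)*(e+3) by rw [fg3 e]; ring]
    push_cast
    field_simp
  have c7 : ((j+e+2).choose (j+1) : ℚ) = ((j:ℚ)+2)*((e:ℚ)+3)*((e:ℚ)+2) * g := by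
    rw [choose_q (j+e+2) (j+1) (e+1) (by omega), hg,
      show (j+2)! = ((j+1)!)*(j+2) by rw [fe2 j, fe1 j]; ring,
      show (e+3)! = ((e+1)!)*((e+3)*(e+2)) by rw [fe3 e, fe1 e]; ring]
    push_cast
    field_simp
  have c8 : ((j+e+3).choose j : ℚ) = ((j:ℚ)+e+3)*((j:ℚ)+2)*((j:ℚ)+1) * g := by
    rw [choose_q (j+e+3) j (e+3) (by omega), show (j+e+3)! = ((j+e)+3)! from rfl, fg3, hg,
      show (j+2)! = (j !)*((j+2)*(j+1)) by rw [fe2 j]; ring]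
    push_cast
    field_simp
  have c9 : ((j+e+2).choose j : ℚ) = ((j:ℚ)+2)*((j:ℚ)+1)*((e:ℚ)+3) * g := by
    rw [choose_q (j+e+2) j (e+2) (by omega), hg,
      show (j+2)! = (j !)*((j+2)*(j+1)) by rw [fe2 j]; ring,
      show (e+3)! = ((e+2)!)*(e+3) by rw [fg3 e]; ring]
    push_cast
    field_simp
  rw [c1, c2, c3, c4, c5, c6, c7, c8, c9]
  field_simp
  ring

lemma nar_rec (m : ℕ) :
    Polynomial.C ((m:ℚ)+4) * narayana (m+3)
    = Polynomial.C (2*(m:ℚ)+5) * ((1+Polynomial.X) * narayana (m+2))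
      - Polynomial.C ((m:ℚ)+1) * ((1-Polynomial.X)^2 * narayana (m+1)) := by
  have E2 : (1+Polynomial.X) * narayana (m+2)
      = narayana (m+2) + Polynomial.X * narayana (m+2) := by ring
  have E3 : (1-Polynomial.X)^2 * narayana (m+1)
      = narayana (m+1) - Polynomial.X * narayana (m+1) - Polynomial.X * narayana (m+1)
        + Polynomial.X * (Polynomial.X * narayana (m+1)) := by ring
  apply Polynomial.ext; intro k
  rw [E2, E3]
  simp only [Polynomial.coeff_C_mul, Polynomial.coeff_add, Polynomial.coeff_sub]
  match k with
  | 0 =>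
    simp only [Polynomial.mul_coeff_zero, Polynomial.coeff_X_zero, zero_mul]
    rw [nar_coeff' (m+3) 0 (by omega), nar_coeff' (m+2) 0 (by omega), nar_coeff' (m+1) 0 (by omega)]
    simp only [Nat.choose_zero_right]
    push_cast
    ring
  | 1 =>
    rw [show (1:ℕ) = 0+1 from rfl]
    simp only [Polynomial.coeff_X_mul, Polynomial.mul_coeff_zero, Polynomial.coeff_X_zero, zero_mul]
    rw [nar_coeff' (m+3) 1 (by omega), nar_coeff' (m+2) 1 (by omega), nar_coeff' (m+2) 0 (by omega),
      nar_coeff' (m+1) 1 (by omega), nar_coeff' (m+1) 0 (by omega)]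
    simp only [Nat.choose_zero_right, Nat.choose_one_right,
      show m+3-1 = m+2 from by omega, show m+2-1 = m+1 from by omega, show m+1-1 = m from by omega]
    push_cast
    ring
  | (j+2) =>
    rw [show j+2 = (j+1)+1 from rfl]
    simp only [Polynomial.coeff_X_mul]
    rw [nar_coeff' (m+3) (j+1+1) (by omega), nar_coeff' (m+2) (j+1+1) (by omega),
      nar_coeff' (m+2) (j+1) (by omega), nar_coeff' (m+1) (j+1+1) (by omega),
      nar_coeff' (m+1) (j+1) (by omega), nar_coeff' (m+1) j (by omega)]
    simp only [show m+3-1 = m+2 from by omega, show m+2-1 = m+1 from by omega,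
      show m+1-1 = m from by omega, show j+1+1 = j+2 from rfl]
    rcases Nat.lt_or_ge m j with h | h
    · -- vanishing case : j = m+1+d
      obtain ⟨d, rfl⟩ : ∃ d, j = m+1+d := ⟨j-m-1, by omega⟩
      rw [Nat.choose_eq_zero_of_lt (show m+2 < m+1+d+2 by omega),
          Nat.choose_eq_zero_of_lt (show m+1 < m+1+d+2 by omega),
          Nat.choose_eq_zero_of_lt (show m+1 < m+1+d+1 by omega),
          Nat.choose_eq_zero_of_lt (show m < m+1+d+2 by omega),
          Nat.choose_eq_zero_of_lt (show m < m+1+d+1 by omega),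
          Nat.choose_eq_zero_of_lt (show m < m+1+d by omega)]
      push_cast
      ring
    · rcases Nat.lt_or_ge m (j+2) with h2 | h2
      · have hmj : m = j ∨ m = j+1 := by omega
        rcases hmj with rfl | rfl
        · push_cast
          linear_combination case_mj m
        · simp only [show j+1+3 = j+4 from by omega, show j+1+2 = j+3 from by omega,
            show j+1+1 = j+2 from by omega]
          push_cast
          linear_combination case_mj1 j
      · obtain ⟨e, rfl⟩ : ∃ e, m = j+2+e := ⟨m-j-2, by omega⟩
        simp only [show j+2+e = j+e+2 from by omega]
        simp only [show j+e+2+3 = j+e+5 from by omega, show j+e+2+2 = j+e+4 from by omega,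
          show j+e+2+1 = j+e+3 from by omega]
        push_cast
        linear_combination main_case j e

lemma nar_one : narayana 1 = 1 := by
  unfold narayana; norm_num

lemma nar_two : narayana 2 = 1 + Polynomial.X := by
  unfold narayana
  rw [if_neg (by norm_num), Finset.sum_range_succ, Finset.sum_range_one]
  norm_num

abbrev PS := PowerSeries (Polynomial ℚ)

noncomputable def Hs : PS := PowerSeries.mk fun n => narayana (n+1)
noncomputable def Ts : PS := PowerSeries.C Polynomial.X

lemma coeff_Hs (n : ℕ) : PowerSeries.coeff n Hs = narayana (n+1) := coeff_mk _ _

lemma coeffCXk (a : Polynomial ℚ) (k n : ℕ) (F : PS) :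
    PowerSeries.coeff n (PowerSeries.C a * ((PowerSeries.X : PS)^k * F))
      = if k ≤ n then a * PowerSeries.coeff (n-k) F else 0 := by
  rw [PowerSeries.coeff_C_mul, PowerSeries.coeff_X_pow_mul', mul_ite, mul_zero]

lemma coeff_dH (n : ℕ) :
    PowerSeries.coeff n (d⁄dX (Polynomial ℚ) Hs) = narayana (n+2) * ((n:Polynomial ℚ)+1) := by
  rw [PowerSeries.coeff_derivative, coeff_Hs]

lemma two_C : (2 : PS) = PowerSeries.C 2 := by
  rw [map_ofNat]

lemma ode :
    (PowerSeries.X : PS) * (1 - 2*(1+Ts)*PowerSeries.X + (1-Ts)^2*PowerSeries.X^2)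
        * (d⁄dX (Polynomial ℚ) Hs)
      + (2 - 3*(1+Ts)*PowerSeries.X + (1-Ts)^2*PowerSeries.X^2) * Hs = 2 := by
  set t : Polynomial ℚ := Polynomial.X with ht
  set DH := d⁄dX (Polynomial ℚ) Hs with hDH
  have e1 : PowerSeries.C (R := Polynomial ℚ) (2+2*t) = 2 + 2*Ts := by
    rw [map_add, map_mul, map_ofNat]; rfl
  have e2 : PowerSeries.C (R := Polynomial ℚ) (3+3*t) = 3 + 3*Ts := by
    rw [map_add, map_mul, map_ofNat]; rfl
  have e3 : PowerSeries.C (R := Polynomial ℚ) ((1-t)^2) = (1-Ts)^2 := by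
    rw [map_pow, map_sub, map_one]; rfl
  have hcan : (PowerSeries.X : PS) * (1 - 2*(1+Ts)*PowerSeries.X + (1-Ts)^2*PowerSeries.X^2) * DH
      + (2 - 3*(1+Ts)*PowerSeries.X + (1-Ts)^2*PowerSeries.X^2) * Hs
      = PowerSeries.C 1 * ((PowerSeries.X:PS)^1 * DH)
        - PowerSeries.C (2+2*t) * ((PowerSeries.X:PS)^2 * DH)
        + PowerSeries.C ((1-t)^2) * ((PowerSeries.X:PS)^3 * DH)
        + PowerSeries.C 2 * ((PowerSeries.X:PS)^0 * Hs)
        - PowerSeries.C (3+3*t) * ((PowerSeries.X:PS)^1 * Hs)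
        + PowerSeries.C ((1-t)^2) * ((PowerSeries.X:PS)^2 * Hs) := by
    rw [e1, e2, e3, map_one, ← two_C]
    ring
  refine PowerSeries.ext fun n => ?_
  rw [hcan, two_C, PowerSeries.coeff_C,
    map_add, map_sub, map_add, map_add, map_sub,
    coeffCXk, coeffCXk, coeffCXk, coeffCXk, coeffCXk, coeffCXk]
  match n with
  | 0 =>
    rw [if_neg (by omega : ¬ (1:ℕ) ≤ 0), if_neg (by omega : ¬ (2:ℕ) ≤ 0),
      if_neg (by omega : ¬ (3:ℕ) ≤ 0), if_pos (le_refl 0), if_pos (rfl : (0:ℕ) = 0)]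
    rw [Nat.sub_zero, coeff_Hs, nar_one]
    norm_num
  | 1 =>
    rw [if_pos (by omega : 1 ≤ 1), if_neg (by omega : ¬ (2:ℕ) ≤ 1),
      if_neg (by omega : ¬ (3:ℕ) ≤ 1), if_pos (by omega : 0 ≤ 1),
      if_neg (by omega : ¬ (1:ℕ) = 0)]
    simp only [Nat.sub_self, Nat.sub_zero]
    rw [coeff_dH, coeff_Hs, coeff_Hs, nar_one, nar_two]
    push_cast
    ring
  | 2 =>
    rw [if_pos (by omega : 1 ≤ 2), if_pos (by omega : 2 ≤ 2),
      if_neg (by omega : ¬ (3:ℕ) ≤ 2), if_pos (by omega : 0 ≤ 2),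
      if_neg (by omega : ¬ (2:ℕ) = 0)]
    simp only [show 2-1 = 1 from rfl, Nat.sub_self, Nat.sub_zero]
    rw [coeff_dH, coeff_dH, coeff_Hs, coeff_Hs, coeff_Hs]
    have hr := nar_rec 0
    simp only [Nat.cast_zero, mul_zero, zero_add, map_ofNat, Polynomial.C_1] at hr
    push_cast at hr ⊢
    linear_combination hr
  | (d+3) =>
    rw [if_pos (by omega : 1 ≤ d+3), if_pos (by omega : 2 ≤ d+3), if_pos (by omega : 3 ≤ d+3),
      if_pos (by omega : 0 ≤ d+3), if_neg (by omega : ¬ (d+3 = 0))]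
    simp only [show d+3-1 = d+2 from by omega, show d+3-2 = d+1 from by omega,
      show d+3-3 = d from by omega, Nat.sub_zero]
    rw [coeff_dH, coeff_dH, coeff_dH, coeff_Hs, coeff_Hs, coeff_Hs]
    have hr := nar_rec (d+1)
    simp only [map_add, map_mul, map_ofNat, Polynomial.C_1, map_natCast] at hr
    push_cast at hr ⊢
    linear_combination hr

noncomputable def Phi : PS :=
  Ts*PowerSeries.X^2*(Hs*Hs) + ((1+Ts)*PowerSeries.X - 1)*Hs + 1

lemma dPhi : d⁄dX (Polynomial ℚ) Phi
    = 2*Ts*PowerSeries.X*(Hs*Hs) + 2*Ts*PowerSeries.X^2*(Hs*(d⁄dX (Polynomial ℚ) Hs))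
      + (1+Ts)*Hs + ((1+Ts)*PowerSeries.X - 1)*(d⁄dX (Polynomial ℚ) Hs) := by
  unfold Phi
  have hT : d⁄dX (Polynomial ℚ) Ts = 0 := PowerSeries.derivative_C
  simp only [map_add, map_sub, map_one, Derivation.leibniz, hT, PowerSeries.derivative_X,
    Derivation.map_one_eq_zero, Derivation.leibniz_pow, smul_eq_mul]
  ring

lemma rel : PowerSeries.X * (1 - 2*(1+Ts)*PowerSeries.X + (1-Ts)^2*PowerSeries.X^2)
      * (d⁄dX (Polynomial ℚ) Phi)
    = (2*(1+Ts)*PowerSeries.X - 2) * Phi := by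
  rw [dPhi]; unfold Phi
  linear_combination (2*Ts*PowerSeries.X^2*Hs + (1+Ts)*PowerSeries.X - 1) * ode

lemma rel' :
    PowerSeries.C (R := Polynomial ℚ) 1 * ((PowerSeries.X:PS)^1 * (d⁄dX (Polynomial ℚ) Phi))
      - PowerSeries.C (2+2*Polynomial.X) * ((PowerSeries.X:PS)^2 * (d⁄dX (Polynomial ℚ) Phi))
      + PowerSeries.C ((1-Polynomial.X)^2) * ((PowerSeries.X:PS)^3 * (d⁄dX (Polynomial ℚ) Phi))
    = PowerSeries.C (2+2*Polynomial.X) * ((PowerSeries.X:PS)^1 * Phi)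
      - PowerSeries.C 2 * ((PowerSeries.X:PS)^0 * Phi) := by
  have e1 : PowerSeries.C (R := Polynomial ℚ) (2+2*Polynomial.X) = 2 + 2*Ts := by
    rw [map_add, map_mul, map_ofNat]; rfl
  have e3 : PowerSeries.C (R := Polynomial ℚ) ((1-Polynomial.X)^2) = (1-Ts)^2 := by
    rw [map_pow, map_sub, map_one]; rfl
  rw [e1, e3, map_one, ← two_C]
  linear_combination rel

lemma natcast_poly_ne (e : ℕ) : ((e : Polynomial ℚ) + 5) ≠ 0 := by
  intro h
  have h0 := congrArg (Polynomial.eval 0) h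
  simp only [Polynomial.eval_add, Polynomial.eval_natCast, Polynomial.eval_ofNat,
    Polynomial.eval_zero] at h0
  have : (0:ℚ) < (e:ℚ) + 5 := by positivity
  linarith

lemma phiCan : Phi = PowerSeries.C (R := Polynomial ℚ) Polynomial.X * ((PowerSeries.X:PS)^2 * (Hs*Hs))
    + PowerSeries.C 1 * ((PowerSeries.X:PS)^1 * Hs)
    + PowerSeries.C Polynomial.X * ((PowerSeries.X:PS)^1 * Hs)
    - PowerSeries.C 1 * ((PowerSeries.X:PS)^0 * Hs) + 1 := by
  unfold Phi
  rw [map_one]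
  show Ts*PowerSeries.X^2*(Hs*Hs) + ((1+Ts)*PowerSeries.X - 1)*Hs + 1
    = Ts * (_*_) + 1 * (_*_) + Ts * (_*_) - 1 * (_*_) + 1
  ring

lemma coeff_Phi_zero (n : ℕ) : PowerSeries.coeff n Phi = 0 := by
  induction n using Nat.strong_induction_on with
  | _ n ih =>
  match n, ih with
  | 0, _ =>
    rw [phiCan]
    rw [map_add, map_sub, map_add, map_add, coeffCXk, coeffCXk, coeffCXk, coeffCXk,
      PowerSeries.coeff_one]
    rw [if_neg (by omega : ¬ (2:ℕ) ≤ 0), if_neg (by omega : ¬ (1:ℕ) ≤ 0),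
      if_neg (by omega : ¬ (1:ℕ) ≤ 0), if_pos (le_refl 0), if_pos rfl]
    rw [Nat.sub_zero, coeff_Hs, nar_one]
    norm_num
  | 1, _ =>
    rw [phiCan]
    rw [map_add, map_sub, map_add, map_add, coeffCXk, coeffCXk, coeffCXk, coeffCXk,
      PowerSeries.coeff_one]
    rw [if_neg (by omega : ¬ (2:ℕ) ≤ 1), if_pos (le_refl 1), if_pos (le_refl 1),
      if_pos (by omega : 0 ≤ 1), if_neg (by omega : ¬ (1:ℕ) = 0)]
    simp only [Nat.sub_self, Nat.sub_zero]
    rw [coeff_Hs, coeff_Hs, nar_one, nar_two]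
    ring
  | (d+2), ih =>
    have h1 : PowerSeries.coeff (d+1) Phi = 0 := ih _ (by omega)
    have hc := congrArg (PowerSeries.coeff (d+2)) rel'
    rw [map_add, map_sub, map_sub, coeffCXk, coeffCXk, coeffCXk, coeffCXk, coeffCXk] at hc
    rw [if_pos (by omega : 1 ≤ d+2), if_pos (by omega : 2 ≤ d+2),
      if_pos (by omega : 1 ≤ d+2), if_pos (by omega : 0 ≤ d+2)] at hc
    simp only [show d+2-1 = d+1 from by omega, show d+2-2 = d from by omega,
      Nat.sub_zero] at hc
    rcases d with _ | e
    · 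
      rw [if_neg (by omega : ¬ (3:ℕ) ≤ 2)] at hc
      rw [PowerSeries.coeff_derivative, PowerSeries.coeff_derivative, h1] at hc
      have h4 : (4 : Polynomial ℚ) * PowerSeries.coeff 2 Phi = 0 := by
        push_cast at hc
        linear_combination hc
      have := mul_eq_zero.mp h4
      rcases this with h | h
      · norm_num at h
      · exact h
    · 
      have h0 : PowerSeries.coeff (e+1) Phi = 0 := ih _ (by omega)
      rw [if_pos (by omega : 3 ≤ e+1+2)] at hc
      rw [show e+1+2-3 = e from by omega] at hc
      rw [PowerSeries.coeff_derivative, PowerSeries.coeff_derivative,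
        PowerSeries.coeff_derivative] at hc
      rw [show e+1+1 = e+2 from rfl, show e+1+2 = e+3 from rfl] at hc
      rw [h1, h0] at hc
      have h5 : ((e : Polynomial ℚ) + 5) * PowerSeries.coeff (e+3) Phi = 0 := by
        push_cast at hc
        linear_combination hc
      have := mul_eq_zero.mp h5
      rcases this with h | h
      · exact absurd h (natcast_poly_ne e)
      · exact h

lemma Phi_eq : Ts*PowerSeries.X^2*(Hs*Hs) + ((1+Ts)*PowerSeries.X - 1)*Hs + 1 = 0 := by
  refine PowerSeries.ext fun n => ?_
  have := coeff_Phi_zero n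
  unfold Phi at this
  rw [this, map_zero]

lemma GF0_eq : narGF0 = 1 + PowerSeries.X * Hs := by
  refine PowerSeries.ext fun n => ?_
  rw [show narGF0 = PowerSeries.mk narayana from rfl, PowerSeries.coeff_mk,
    map_add, PowerSeries.coeff_one]
  match n with
  | 0 =>
    rw [if_pos rfl]
    rw [show (PowerSeries.coeff 0) (PowerSeries.X * Hs) = 0 by
      simpa using PowerSeries.coeff_X_pow_mul' Hs 1 0]
    simp [narayana]
  | (m+1) =>
    rw [if_neg (by omega), PowerSeries.coeff_succ_X_mul, coeff_Hs, zero_add]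

lemma GF1_eq : narGF1 = 1 + Ts * (PowerSeries.X * Hs) := by
  refine PowerSeries.ext fun n => ?_
  rw [show narGF1 = PowerSeries.mk (fun n => if n = 0 then 1 else Polynomial.X * narayana n)
      from rfl, PowerSeries.coeff_mk, map_add, PowerSeries.coeff_one,
    show Ts = PowerSeries.C (R := Polynomial ℚ) Polynomial.X from rfl, PowerSeries.coeff_C_mul]
  match n with
  | 0 =>
    rw [if_pos rfl, if_pos rfl]
    rw [show (PowerSeries.coeff 0) (PowerSeries.X * Hs) = 0 by
      simpa using PowerSeries.coeff_X_pow_mul' Hs 1 0]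
    simp
  | (m+1) =>
    rw [if_neg (by omega), if_neg (by omega), PowerSeries.coeff_succ_X_mul, coeff_Hs, zero_add]

/-- `C_{2,n}(t) = C_{n+1}(t)`: the coefficient of `xⁿ` in `c₀(x,t)·c₁(x,t)` is the
`(n+1)`-st Narayana polynomial. -/

theorem stmt13 (n : ℕ) :
    PowerSeries.coeff n (narGF0 * narGF1) = narayana (n + 1) := by
  have hprod : narGF0 * narGF1 = Hs := by
    rw [GF0_eq, GF1_eq]
    linear_combination Phi_eq
  rw [hprod, coeff_Hs]
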